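/- For k > 2, if G - xy is k-colorable and G is not k-colorable, then for every r with 3 ≤ r ≤ k, the graph G - xy contains at least (r-1)!/2 cycles whose lengths are divisible by r. -/

import Mathlib

/-- `H` is a cycle subgraph of `G` of length `n`. -/
def SimpleGraph.IsCycleSubgraph {V : Type*} (G : SimpleGraph V) (H : G.Subgraph) (n : ℕ) : Prop :=
  ∃ (v : V) (w : G.Walk v v), w.IsCycle ∧ w.length = n ∧ w.toSubgraph = H

namespace Stmt5Aux

open SimpleGraph
open Fin.NatCast
open Fin.CommRing

variable {V : Type*} {G : SimpleGraph V} {k r : ℕ}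

/-- A walk whose darts follow the cyclic color order given by `e`. -/
def Dir [NeZero r] (c : V → Fin k) (e : Fin r → Fin k) {u v : V} (w : G.Walk u v) : Prop :=
  ∀ d ∈ w.darts, ∃ i : Fin r, c d.fst = e i ∧ c d.snd = e (i + 1)

variable {c : V → Fin k} {e : Fin r → Fin k}

lemma dir_of_subset [NeZero r] {u v u' v' : V} {w : G.Walk u v} {w' : G.Walk u' v'}
    (hsub : w'.darts ⊆ w.darts) (hd : Dir c e w) : Dir c e w' :=
  fun d hd' => hd d (hsub hd')

lemma dir_end_color [NeZero r] (he : Function.Injective e) :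
    ∀ {u v : V} (w : G.Walk u v), Dir c e w → ∀ a : Fin r, c u = e a →
      c v = e (a + (w.length : Fin r)) := by
  intro u v w
  induction w with
  | nil => intro _ a ha; simpa using ha
  | @cons u u' v h t ih =>
    intro hd a ha
    obtain ⟨i, hi1, hi2⟩ := hd ⟨(u, u'), h⟩ (by simp [SimpleGraph.Walk.darts_cons])
    have hia : i = a := he (by rw [← hi1, ← ha])
    subst hia
    have := ih (dir_of_subset (by simp [SimpleGraph.Walk.darts_cons]) hd)
      (i + 1) hi2
    rw [this, SimpleGraph.Walk.length_cons]
    congr 1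
    push_cast
    ring

lemma closed_dir_dvd [NeZero r] (he : Function.Injective e) {u : V} (w : G.Walk u u)
    (hd : Dir c e w) : r ∣ w.length := by
  cases w with
  | nil => simp
  | @cons _ u' _ h t =>
    obtain ⟨i, hi1, _⟩ := hd ⟨(u, u'), h⟩ (by simp [SimpleGraph.Walk.darts_cons])
    have hend := dir_end_color he (G := G) (SimpleGraph.Walk.cons h t) hd i hi1
    have : i = i + (((SimpleGraph.Walk.cons h t).length : ℕ) : Fin r) := he (by rw [← hi1, hend])
    have hz : (((SimpleGraph.Walk.cons h t).length : ℕ) : Fin r) = 0 := by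
      have := congrArg (fun z => z - i) this
      simpa [add_comm, add_sub_cancel_right] using this.symm
    have := congrArg Fin.val hz
    rw [Fin.val_natCast] at this
    exact Nat.dvd_of_mod_eq_zero (by simpa using this)


lemma two_ne_zero' [NeZero r] (hr : 3 ≤ r) : (2 : Fin r) ≠ 0 := by
  have h2 : ((2 : ℕ) : Fin r) ≠ 0 := by
    intro h
    have := congrArg Fin.val h
    rw [Fin.val_natCast, Nat.mod_eq_of_lt (by omega)] at this
    simp at this
  simpa using h2

lemma exists_dir_cycle [NeZero r] (he : Function.Injective e) (hr : 3 ≤ r) :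
    ∀ L : ℕ, ∀ {u : V} (w : G.Walk u u), w.length = L → Dir c e w → 0 < w.length →
    ∃ (z : V) (wc : G.Walk z z), wc.IsCycle ∧ Dir c e wc := by
  classical
  intro L
  induction L using Nat.strong_induction_on with
  | _ L ih =>
    intro u w hL hd hpos
    by_cases hnd : w.support.tail.Nodup
    · -- base case : w itself is a cycle
      cases w with
      | nil => simp at hpos
      | @cons _ z₁ _ hadj t =>
        refine ⟨u, SimpleGraph.Walk.cons hadj t, ?_, hd⟩
        rw [SimpleGraph.Walk.cons_isCycle_iff]
        have hsupp : t.support.Nodup := by simpa using hnd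
        constructor
        · rw [SimpleGraph.Walk.isPath_def]; exact hsupp
        · intro hmem
          rw [SimpleGraph.Walk.edges] at hmem
          obtain ⟨d, hdmem, hedge⟩ := List.mem_map.mp hmem
          have hedge' : s(d.fst, d.snd) = s(u, z₁) := hedge
          rw [Sym2.eq_iff] at hedge'
          rcases hedge' with ⟨hf, hs⟩ | ⟨hf, hs⟩
          · -- dart (u, z₁) repeated : z₁ ∈ t.support.tail, contradiction with nodup
            have : d.snd ∈ t.darts.map (·.snd) := List.mem_map_of_mem hdmem
            rw [SimpleGraph.Walk.map_snd_darts, hs] at this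
            have := SimpleGraph.Walk.support_eq_cons t
            rw [this] at hsupp
            exact (List.nodup_cons.mp hsupp).1 ‹z₁ ∈ t.support.tail›
          · -- reversed dart (z₁, u) : color contradiction
            obtain ⟨i, hi1, hi2⟩ := hd ⟨(u, z₁), hadj⟩ (by simp [SimpleGraph.Walk.darts_cons])
            obtain ⟨j, hj1, hj2⟩ := hd d (by rw [SimpleGraph.Walk.darts_cons]; exact List.mem_cons_of_mem _ hdmem)
            rw [hf] at hj1
            rw [hs] at hj2
            have hji : j = i + 1 := he (by rw [← hj1, ← hi2])
            subst hji
            have : i = i + 1 + 1 := he (by rw [← hi1, ← hj2])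
            have h20 : (2 : Fin r) = 0 := by
              have := congrArg (fun z => z - i) this
              rw [add_assoc] at this
              have : (0 : Fin r) = 1 + 1 := by
                simpa [add_comm, add_sub_cancel_right, sub_self] using this
              rw [this]
              norm_num
            exact two_ne_zero' hr h20
    · -- recursive case: find a shorter closed walk
      obtain ⟨z, hzc⟩ : ∃ z, 2 ≤ w.support.tail.count z := by
        by_contra hno
        push_neg at hno
        exact hnd (List.nodup_iff_count_le_one.mpr (fun a => by have := hno a; omega))
      have hz : z ∈ w.support := by
        rw [SimpleGraph.Walk.support_eq_cons]
        exact List.mem_cons_of_mem _ (List.count_pos_iff.mp (by omega))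
      set w' := w.rotate z hz with hw'
      have hd' : Dir c e w' := dir_of_subset
        (fun d h => (SimpleGraph.Walk.rotate_darts w z hz).mem_iff.mp h) hd
      have hlen' : w'.length = w.length := by
        have h1 := (SimpleGraph.Walk.rotate_darts w z hz).perm.length_eq
        rw [SimpleGraph.Walk.length_darts, SimpleGraph.Walk.length_darts] at h1
        exact h1
      have hcount' : 2 ≤ w'.support.tail.count z := by
        rw [(SimpleGraph.Walk.support_rotate w z hz).perm.count_eq]
        exact hzc
      have hnn : ¬ w'.Nil := by
        rw [SimpleGraph.Walk.not_nil_iff_lt_length, hlen']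
        exact hpos
      obtain ⟨z₁, hadj, t, ht⟩ := SimpleGraph.Walk.not_nil_iff.mp hnn
      have htail : w'.support.tail = t.support := by rw [ht]; simp
      have hzt : z ∈ t.support := by
        rw [← htail]
        exact List.count_pos_iff.mp (by omega)
      set t2 := t.dropUntil z hzt with ht2
      have hd2 : Dir c e t2 := by
        apply dir_of_subset (w := w') ?_ hd'
        intro d hdm
        rw [ht, SimpleGraph.Walk.darts_cons]
        exact List.mem_cons_of_mem _ (SimpleGraph.Walk.darts_dropUntil_subset t hzt hdm)
      have hlt : t2.length < L := by
        have h1 : t2.length ≤ t.length := SimpleGraph.Walk.length_dropUntil_le t hzt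
        have h2 : t.length + 1 = w'.length := by rw [ht]; simp
        omega
      have hpos2 : 0 < t2.length := by
        have hsplit := SimpleGraph.Walk.take_spec t hzt
        have hcnt : t.support.count z =
            (t.takeUntil z hzt).support.count z + t2.support.tail.count z := by
          conv_lhs => rw [← hsplit]
          rw [SimpleGraph.Walk.support_append, List.count_append]
        rw [SimpleGraph.Walk.count_support_takeUntil_eq_one] at hcnt
        have hc2 : 1 ≤ t2.support.tail.count z := by
          have := hzt
          rw [← htail] at *
          omega
        have hle : t2.support.tail.count z ≤ t2.support.tail.length := List.count_le_length
        have : t2.support.tail.length = t2.length := by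
          have := SimpleGraph.Walk.length_support t2
          rw [List.length_tail, this]
          omega
        omega
      exact ih t2.length hlt t2 rfl hd2 hpos2


/-- there is a walk from `u` to `v` following the color order -/
def Reach [NeZero r] (G : SimpleGraph V) (c : V → Fin k) (e : Fin r → Fin k) (u v : V) : Prop :=
  ∃ w : G.Walk u v, Dir c e w

lemma reach_self [NeZero r] (u : V) : Reach G c e u u :=
  ⟨SimpleGraph.Walk.nil, fun d hd => by simp at hd⟩

lemma reach_extend [NeZero r] {s u v : V} (h : Reach G c e s u) (hadj : G.Adj u v)
    (i : Fin r) (hu : c u = e i) (hv : c v = e (i + 1)) : Reach G c e s v := by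
  obtain ⟨w, hw⟩ := h
  refine ⟨w.concat hadj, ?_⟩
  intro d hd
  rw [SimpleGraph.Walk.darts_concat, List.concat_eq_append, List.mem_append] at hd
  rcases hd with hd | hd
  · exact hw d hd
  · simp at hd
    subst hd
    exact ⟨i, hu, hv⟩

lemma dir_end_color' [NeZero r] (he : Function.Injective e) :
    ∀ {u v : V} (w : G.Walk u v), Dir c e w → ∀ a : Fin r, c u = e a →
      c v = e (a + (w.length : Fin r)) := by
  intro u v w
  induction w with
  | nil => intro _ a ha; simpa using ha
  | @cons u u' v h t ih =>
    intro hd a ha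
    obtain ⟨i, hi1, hi2⟩ := hd ⟨(u, u'), h⟩ (by simp [SimpleGraph.Walk.darts_cons])
    have hia : i = a := he (by rw [← hi1, ← ha])
    subst hia
    have := ih (fun d hd' => hd d (by rw [SimpleGraph.Walk.darts_cons]; exact List.mem_cons_of_mem _ hd'))
      (i + 1) hi2
    rw [this, SimpleGraph.Walk.length_cons]
    congr 1
    push_cast
    ring

lemma reach_color [NeZero r] (he : Function.Injective e) {s u : V} (h : Reach G c e s u)
    (a : Fin r) (hs : c s = e a) : ∃ i, c u = e i := by
  obtain ⟨w, hw⟩ := h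
  exact ⟨_, dir_end_color' he w hw a hs⟩

lemma recolor_proper [NeZero r]
    (hvalid : ∀ ⦃u v : V⦄, G.Adj u v → c u ≠ c v)
    (he : Function.Injective e) {s : V} (hs : c s = e 0) :
    ∃ c' : V → Fin k, (∀ ⦃u v⦄, G.Adj u v → c' u ≠ c' v) ∧ c' s = e 1 ∧
      (∀ v, ¬ Reach G c e s v → c' v = c v) := by
  classical
  set c' : V → Fin k := fun v =>
    if h : ∃ i, Reach G c e s v ∧ c v = e i then e (h.choose + 1) else c v with hc'
  have hW : ∀ v (i : Fin r), Reach G c e s v → c v = e i → c' v = e (i + 1) := by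
    intro v i hrv hcv
    have hex : ∃ i, Reach G c e s v ∧ c v = e i := ⟨i, hrv, hcv⟩
    have hspec := hex.choose_spec
    have : hex.choose = i := he (by rw [← hspec.2, ← hcv])
    rw [hc']
    simp only [dif_pos hex]
    rw [this]
  have hNW : ∀ v, ¬ Reach G c e s v → c' v = c v := by
    intro v hv
    rw [hc']
    simp only []
    rw [dif_neg]
    rintro ⟨i, h1, _⟩
    exact hv h1
  have hWrange : ∀ v, Reach G c e s v → ∃ i, c v = e i := fun v h => reach_color he h 0 hs
  refine ⟨c', ?_, (by rw [hW s 0 (reach_self s) hs, zero_add]), hNW⟩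
  intro u v hadj
  by_cases hu : Reach G c e s u <;> by_cases hv : Reach G c e s v
  · obtain ⟨iu, hiu⟩ := hWrange u hu
    obtain ⟨iv, hiv⟩ := hWrange v hv
    rw [hW u iu hu hiu, hW v iv hv hiv]
    intro h
    have hiuv : iu = iv := add_right_cancel (he h)
    exact hvalid hadj (by rw [hiu, hiv, hiuv])
  · obtain ⟨iu, hiu⟩ := hWrange u hu
    rw [hW u iu hu hiu, hNW v hv]
    intro h
    exact hv (reach_extend hu hadj iu hiu h.symm)
  · obtain ⟨iv, hiv⟩ := hWrange v hv
    rw [hNW u hu, hW v iv hv hiv]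
    intro h
    exact hu (reach_extend hv hadj.symm iv hiv h)
  · rw [hNW u hu, hNW v hv]
    exact hvalid hadj

lemma zero_ne_one' [NeZero r] (hr : 3 ≤ r) : (0 : Fin r) ≠ 1 := by
  intro h
  have := congrArg Fin.val h
  have h1 : (1 : Fin r) = ((1 : ℕ) : Fin r) := by norm_cast
  rw [h1, Fin.val_natCast, Nat.mod_eq_of_lt (by omega)] at this
  simp at this

lemma reach_both [NeZero r] (hr3 : 3 ≤ r) {x y : V}
    (hvalid : ∀ ⦃u v : V⦄, G.Adj u v → c u ≠ c v)
    (hne : ∀ c'' : V → Fin k, (∀ ⦃u v : V⦄, G.Adj u v → c'' u ≠ c'' v) → c'' x = c'' y)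
    (he : Function.Injective e) (hx : c x = e 0) (hy : c y = e 0) :
    Reach G c e y x ∧ Reach G c e x y := by
  constructor
  · obtain ⟨c', hproper, hcs, hnw⟩ := recolor_proper hvalid he hy
    by_contra hre
    have hxx : c' x = c x := hnw x hre
    have := hne c' hproper
    rw [hxx, hcs, hx] at this
    exact zero_ne_one' hr3 (he this)
  · obtain ⟨c', hproper, hcs, hnw⟩ := recolor_proper hvalid he hx
    by_contra hre
    have hyy : c' y = c y := hnw y hre
    have := hne c' hproper
    rw [hyy, hcs, hy] at this
    exact zero_ne_one' hr3 (he this).symm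


lemma two_ne_zero'' [NeZero r] (hr : 3 ≤ r) : (2 : Fin r) ≠ 0 := by
  have h2 : ((2 : ℕ) : Fin r) ≠ 0 := by
    intro h
    have := congrArg Fin.val h
    rw [Fin.val_natCast, Nat.mod_eq_of_lt (by omega)] at this
    simp at this
  simpa using h2

lemma add_two_ne [NeZero r] (hr : 3 ≤ r) (i : Fin r) : i + 1 + 1 ≠ i := by
  intro h
  apply two_ne_zero'' hr
  rw [add_assoc] at h
  have h2 : i + (1 + 1) = i + 0 := by rw [h, add_zero]
  have := add_left_cancel h2
  rw [← this]
  norm_num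

lemma dir_all_pairs [NeZero r] (he : Function.Injective e) :
    ∀ {u v : V} (w : G.Walk u v), Dir c e w → ∀ a : Fin r, c u = e a →
      ∀ j : ℕ, j < w.length →
        ∃ d ∈ w.darts, c d.fst = e (a + (j : Fin r)) ∧ c d.snd = e (a + (j : Fin r) + 1) := by
  intro u v w
  induction w with
  | nil => intro _ a _ j hj; simp at hj
  | @cons u u' v h t ih =>
    intro hd a ha j hj
    obtain ⟨i, hi1, hi2⟩ := hd ⟨(u, u'), h⟩ (by simp [SimpleGraph.Walk.darts_cons])
    have hia : i = a := he (by rw [← hi1, ← ha])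
    subst hia
    match j with
    | 0 =>
      refine ⟨⟨(u, u'), h⟩, by simp [SimpleGraph.Walk.darts_cons], ?_, ?_⟩
      · simpa using hi1
      · simpa using hi2
    | (j' + 1) =>
      have hj' : j' < t.length := by
        rw [SimpleGraph.Walk.length_cons] at hj; omega
      obtain ⟨d, hdm, hd1, hd2⟩ := ih
        (fun d hd' => hd d (by rw [SimpleGraph.Walk.darts_cons]; exact List.mem_cons_of_mem _ hd'))
        (i + 1) hi2 j' hj'
      refine ⟨d, by rw [SimpleGraph.Walk.darts_cons]; exact List.mem_cons_of_mem _ hdm, ?_, ?_⟩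
      · rw [hd1]; congr 1; push_cast; ring
      · rw [hd2]; congr 1; push_cast; ring

lemma closed_dir_dvd' [NeZero r] (he : Function.Injective e) {u : V} (w : G.Walk u u)
    (hd : Dir c e w) : r ∣ w.length := closed_dir_dvd he w hd

lemma cycle_all_pairs [NeZero r] (he : Function.Injective e) {z : V} (w : G.Walk z z)
    (hpos : 0 < w.length) (hd : Dir c e w) :
    ∀ i : Fin r, ∃ d ∈ w.darts, c d.fst = e i ∧ c d.snd = e (i + 1) := by
  intro i
  have hnn : ¬ w.Nil := by rwa [SimpleGraph.Walk.not_nil_iff_lt_length]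
  obtain ⟨z₁, hadj, t, ht⟩ := SimpleGraph.Walk.not_nil_iff.mp hnn
  obtain ⟨a, ha1, _⟩ := hd ⟨(z, z₁), hadj⟩ (by rw [ht]; simp [SimpleGraph.Walk.darts_cons])
  have hrle : r ≤ w.length := Nat.le_of_dvd hpos (closed_dir_dvd' he w hd)
  have hj : ((i - a).val : ℕ) < w.length := lt_of_lt_of_le (i - a).isLt hrle
  obtain ⟨d, hdm, h1, h2⟩ := dir_all_pairs he w hd a ha1 (i - a).val hj
  rw [Fin.cast_val_eq_self] at h1 h2
  have : a + (i - a) = i := by ring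
  rw [this] at h1 h2
  exact ⟨d, hdm, h1, h2⟩

lemma same_subgraph_dart {z z' : V} {w : G.Walk z z} {w' : G.Walk z' z'}
    (hsub : w.toSubgraph = w'.toSubgraph) {d : G.Dart} (hd : d ∈ w.darts) :
    ∃ d' ∈ w'.darts, s(d'.fst, d'.snd) = s(d.fst, d.snd) := by
  have h1 : d.edge ∈ w.edges := List.mem_map_of_mem hd
  have h2 : d.edge ∈ w.toSubgraph.edgeSet := by
    rw [SimpleGraph.Walk.edgeSet_toSubgraph]; exact h1
  rw [hsub, SimpleGraph.Walk.edgeSet_toSubgraph] at h2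
  obtain ⟨d', hd'm, hd'e⟩ := List.mem_map.mp h2
  exact ⟨d', hd'm, hd'e⟩

lemma perm_eq_of_steps [NeZero r] (hr3 : 3 ≤ r) (φ : Equiv.Perm (Fin r)) (h0 : φ 0 = 0)
    (hstep : ∀ i : Fin r, φ (i + 1) = φ i + 1 ∨ φ i = φ (i + 1) + 1) :
    (∀ i, φ i = i) ∨ (∀ i, φ i = -i) := by
  set P : Fin r → Prop := fun i => φ (i + 1) = φ i + 1 with hP
  have hup : ∀ i, P i → P (i + 1) := by
    intro i hPi
    rcases hstep (i + 1) with h | h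
    · exact h
    · exfalso
      have h1 : φ (i + 1 + 1) + 1 + 1 = φ i + 1 + 1 := by rw [← h, ← hPi]
      have h2 : φ (i + 1 + 1) = φ i := by
        have := add_right_cancel (add_right_cancel h1); exact this
      exact add_two_ne hr3 i (φ.injective h2)
  have hdown : ∀ i, ¬ P i → ¬ P (i + 1) := by
    intro i hPi hPsi
    have h := (hstep i).resolve_left hPi
    have h2 : φ (i + 1 + 1) = φ i := by rw [hPsi, ← h]
    exact add_two_ne hr3 i (φ.injective h2)
  by_cases hP0 : P 0
  · left
    have hall : ∀ n : ℕ, P ((n : ℕ) : Fin r) := by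
      intro n
      induction n with
      | zero => simpa using hP0
      | succ n ihn =>
        have := hup _ ihn
        have hcast : ((n + 1 : ℕ) : Fin r) = ((n : ℕ) : Fin r) + 1 := by push_cast; ring
        rwa [hcast]
    have hvals : ∀ n : ℕ, φ ((n : ℕ) : Fin r) = ((n : ℕ) : Fin r) := by
      intro n
      induction n with
      | zero => simpa using h0
      | succ n ihn =>
        have hcast : ((n + 1 : ℕ) : Fin r) = ((n : ℕ) : Fin r) + 1 := by push_cast; ring
        rw [hcast, hall n, ihn]
    intro i
    have := hvals i.val
    rwa [Fin.cast_val_eq_self] at this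
  · right
    have hall : ∀ n : ℕ, ¬ P ((n : ℕ) : Fin r) := by
      intro n
      induction n with
      | zero => simpa using hP0
      | succ n ihn =>
        have := hdown _ ihn
        have hcast : ((n + 1 : ℕ) : Fin r) = ((n : ℕ) : Fin r) + 1 := by push_cast; ring
        rwa [hcast]
    have hvals : ∀ n : ℕ, φ ((n : ℕ) : Fin r) = -((n : ℕ) : Fin r) := by
      intro n
      induction n with
      | zero => simpa using h0
      | succ n ihn =>
        have h := (hstep ((n : ℕ) : Fin r)).resolve_left (hall n)
        have h2 : φ (((n : ℕ) : Fin r) + 1) = φ ((n : ℕ) : Fin r) - 1 := by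
          rw [h]; ring
        have hcast : ((n + 1 : ℕ) : Fin r) = ((n : ℕ) : Fin r) + 1 := by push_cast; ring
        rw [hcast, h2, ihn]
        push_cast
        ring
    intro i
    have := hvals i.val
    rwa [Fin.cast_val_eq_self] at this

lemma sigma_eq_of_same_subgraph [NeZero r] (hr3 : 3 ≤ r) {ι : Fin r → Fin k}
    (hι : Function.Injective ι) (σ σ' : Equiv.Perm (Fin r))
    (hσ'0 : σ' 0 = 0) (hσ0 : σ 0 = 0)
    {z z' : V} {w : G.Walk z z} {w' : G.Walk z' z'}
    (hw : Dir c (ι ∘ σ) w) (hw' : Dir c (ι ∘ σ') w')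
    (hpos : 0 < w.length) (hpos' : 0 < w'.length)
    (hsub : w.toSubgraph = w'.toSubgraph) :
    σ' = σ ∨ σ' = (Equiv.neg (Fin r)).trans σ := by
  have hinj : Function.Injective (ι ∘ σ) := hι.comp σ.injective
  have hinj' : Function.Injective (ι ∘ σ') := hι.comp σ'.injective
  set φ : Equiv.Perm (Fin r) := σ.trans σ'.symm with hφ
  have hφ0 : φ 0 = 0 := by
    show σ'.symm (σ 0) = 0
    rw [hσ0]
    exact (Equiv.symm_apply_eq σ').mpr hσ'0.symm
  have happ : ∀ i j : Fin r, ι (σ' j) = ι (σ i) → j = φ i := by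
    intro i j h
    have := hι h
    show j = σ'.symm (σ i)
    rw [← this, Equiv.symm_apply_apply]
  have hstep : ∀ i : Fin r, φ (i + 1) = φ i + 1 ∨ φ i = φ (i + 1) + 1 := by
    intro i
    obtain ⟨d, hdm, h1, h2⟩ := cycle_all_pairs hinj w hpos hw i
    obtain ⟨d', hd'm, hd'e⟩ := same_subgraph_dart hsub hdm
    obtain ⟨j, hj1, hj2⟩ := hw' d' hd'm
    simp only [Function.comp_apply] at h1 h2 hj1 hj2
    rw [Sym2.eq_iff] at hd'e
    rcases hd'e with ⟨hf, hs⟩ | ⟨hf, hs⟩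
    · left
      have e1 : j = φ i := happ _ _ (by rw [← hj1, ← h1, hf])
      have e2 : j + 1 = φ (i + 1) := happ _ _ (by rw [← hj2, ← h2, hs])
      rw [← e1, ← e2]
    · right
      have e1 : j = φ (i + 1) := happ _ _ (by rw [← hj1, ← h2, hf])
      have e2 : j + 1 = φ i := happ _ _ (by rw [← hj2, ← h1, hs])
      rw [← e1, ← e2]
  rcases perm_eq_of_steps hr3 φ hφ0 hstep with hall | hall
  · left
    refine Equiv.ext fun j => ?_
    have h2 : σ'.symm (σ j) = j := hall j
    have h3 := congrArg σ' h2
    rw [Equiv.apply_symm_apply] at h3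
    exact h3.symm
  · right
    refine Equiv.ext fun j => ?_
    show σ' j = σ (-j)
    have h2 : σ'.symm (σ (-j)) = -(-j) := hall (-j)
    rw [neg_neg] at h2
    have h3 := congrArg σ' h2
    rw [Equiv.apply_symm_apply] at h3
    exact h3.symm


end Stmt5Aux

open Stmt5Aux in
theorem stmt5 {V : Type*} [Fintype V] (G : SimpleGraph V) (x y : V) (hxy : G.Adj x y)
    (k : ℕ) (hk : 2 < k)
    (hdel : (G.deleteEdges {s(x, y)}).Colorable k) (hG : ¬ G.Colorable k)
    (r : ℕ) (hr3 : 3 ≤ r) (hrk : r ≤ k) :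
    Nat.factorial (r - 1) / 2 ≤
      {H : (G.deleteEdges {s(x, y)}).Subgraph |
        ∃ n, r ∣ n ∧ (G.deleteEdges {s(x, y)}).IsCycleSubgraph H n}.ncard := by
  classical
  obtain ⟨n, rfl⟩ : ∃ n, r = n + 1 := ⟨r - 1, by omega⟩
  set r := n + 1 with hr
  haveI : NeZero r := ⟨Nat.succ_ne_zero n⟩
  set G' := G.deleteEdges {s(x, y)} with hG'def
  set T : Set G'.Subgraph := {H : G'.Subgraph | ∃ m, r ∣ m ∧ G'.IsCycleSubgraph H m} with hT
  obtain ⟨C⟩ := hdel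
  set c : V → Fin k := ⇑C with hc
  have hvalid : ∀ ⦃u v : V⦄, G'.Adj u v → c u ≠ c v := fun u v h => C.valid h
  have hne : ∀ c'' : V → Fin k, (∀ ⦃u v : V⦄, G'.Adj u v → c'' u ≠ c'' v) → c'' x = c'' y := by
    intro c'' hval
    by_contra hxy'
    apply hG
    refine ⟨SimpleGraph.Coloring.mk c'' ?_⟩
    intro u v huv
    by_cases hmem : s(u, v) = s(x, y)
    · rw [Sym2.eq_iff] at hmem
      rcases hmem with ⟨rfl, rfl⟩ | ⟨rfl, rfl⟩
      · exact hxy'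
      · exact fun h => hxy' h.symm
    · refine hval ?_
      rw [hG'def, SimpleGraph.deleteEdges_adj]
      exact ⟨huv, by simpa using hmem⟩
  have hcxy : c x = c y := hne c hvalid
  have hxyne : x ≠ y := G.ne_of_adj hxy
  -- the fixed injection of colors
  set ι : Fin r → Fin k := fun i => (Equiv.swap (Fin.castLE hrk 0) (c x)) (Fin.castLE hrk i)
    with hιdef
  have hιinj : Function.Injective ι :=
    fun a b h => Fin.castLE_injective hrk ((Equiv.swap _ _).injective h)
  have hι0 : ι 0 = c x := by rw [hιdef]; simp
  -- for each based permutation, a directed cycle exists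
  have hcyc : ∀ σ : Equiv.Perm (Fin r), σ 0 = 0 →
      ∃ (z : V) (wc : G'.Walk z z), wc.IsCycle ∧ Dir c (ι ∘ σ) wc := by
    intro σ hσ0
    have he : Function.Injective (ι ∘ σ) := hιinj.comp σ.injective
    have hx0 : c x = (ι ∘ σ) 0 := by
      rw [Function.comp_apply, hσ0, hι0]
    have hy0 : c y = (ι ∘ σ) 0 := by rw [← hcxy]; exact hx0
    obtain ⟨⟨w1, hw1⟩, ⟨w2, hw2⟩⟩ := reach_both hr3 hvalid hne he hx0 hy0
    -- w1 : y → x, w2 : x → y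
    set w := w1.append w2 with hw
    have hdw : Dir c (ι ∘ σ) w := by
      intro d hd
      rw [hw, SimpleGraph.Walk.darts_append, List.mem_append] at hd
      rcases hd with h | h
      exacts [hw1 d h, hw2 d h]
    have hpos : 0 < w.length := by
      rw [hw, SimpleGraph.Walk.length_append]
      rcases Nat.eq_zero_or_pos w1.length with h | h
      · exact absurd (SimpleGraph.Walk.eq_of_length_eq_zero h) (Ne.symm hxyne)
      · omega
    exact exists_dir_cycle he hr3 w.length w rfl hdw hpos
  -- choose the cycles
  have H := fun (σ : {σ : Equiv.Perm (Fin r) // σ 0 = 0}) => hcyc σ.1 σ.2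
  choose z wc hcycle hdir using H
  set F : {σ : Equiv.Perm (Fin r) // σ 0 = 0} → G'.Subgraph := fun σ => (wc σ).toSubgraph
    with hF
  -- F lands in T
  have hmemT : ∀ σ, F σ ∈ T := by
    intro σ
    refine ⟨(wc σ).length, ?_, z σ, wc σ, hcycle σ, rfl, rfl⟩
    exact closed_dir_dvd (hιinj.comp σ.1.injective) (wc σ) (hdir σ)
  -- fibers of F have at most two elements
  have hposlen : ∀ σ, 0 < (wc σ).length := by
    intro σ
    have := (hcycle σ).three_le_length
    omega
  have hfiber : ∀ σ τ, F σ = F τ → τ = σ ∨ τ.1 = (Equiv.neg (Fin r)).trans σ.1 := by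
    intro σ τ hFeq
    have := sigma_eq_of_same_subgraph (G := G') (c := c) hr3 hιinj σ.1 τ.1 τ.2 σ.2
      (hdir σ) (hdir τ) (hposlen σ) (hposlen τ) hFeq
    rcases this with h | h
    · exact Or.inl (Subtype.ext h)
    · exact Or.inr h
  -- counting
  haveI : Finite G'.Subgraph := by
    have hinj : Function.Injective (fun H : G'.Subgraph => (H.verts, H.Adj)) := by
      intro H1 H2 h
      rw [Prod.mk.injEq] at h
      exact SimpleGraph.Subgraph.ext h.1 h.2
    exact Finite.of_injective _ hinj
  have hTfin : T.Finite := Set.toFinite T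
  -- cardinality of the domain
  have hcardD : Fintype.card {σ : Equiv.Perm (Fin r) // σ 0 = 0} = n.factorial := by
    have eqv : {σ : Equiv.Perm (Fin r) // σ 0 = 0} ≃ Equiv.Perm (Fin n) :=
      { toFun := fun σ => (Equiv.Perm.decomposeFin σ.1).2
        invFun := fun π =>
          ⟨Equiv.Perm.decomposeFin.symm (0, π), Equiv.Perm.decomposeFin_symm_apply_zero 0 π⟩
        left_inv := by
          rintro ⟨σ, hσ⟩
          apply Subtype.ext
          simp only
          have h1 : Equiv.Perm.decomposeFin.symm (Equiv.Perm.decomposeFin σ) = σ :=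
            Equiv.symm_apply_apply _ _
          have h0 : (Equiv.Perm.decomposeFin σ).1 = 0 := by
            have h2 := Equiv.Perm.decomposeFin_symm_apply_zero
              (Equiv.Perm.decomposeFin σ).1 (Equiv.Perm.decomposeFin σ).2
            rw [Prod.mk.eta, h1] at h2
            rw [← h2, hσ]
          rw [← h0, Prod.mk.eta, h1]
        right_inv := by
          intro π
          simp only [Equiv.apply_symm_apply] }
    rw [Fintype.card_congr eqv, Fintype.card_perm, Fintype.card_fin]
  -- the image as a finset
  set s : Finset {σ : Equiv.Perm (Fin r) // σ 0 = 0} := Finset.univ with hs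
  have hcount : s.card ≤ 2 * (s.image F).card := by
    apply Finset.card_le_mul_card_image
    intro b hb
    rw [Finset.mem_image] at hb
    obtain ⟨σ0, _, hσ0⟩ := hb
    have hsub : (s.filter fun a => F a = b) ⊆
        {σ0, ⟨(Equiv.neg (Fin r)).trans σ0.1, by simp [σ0.2]⟩} := by
      intro τ hτ
      rw [Finset.mem_filter] at hτ
      have := hfiber σ0 τ (by rw [hσ0, hτ.2])
      rcases this with h | h
      · exact Finset.mem_insert.mpr (Or.inl h)
      · refine Finset.mem_insert.mpr (Or.inr ?_)
        rw [Finset.mem_singleton]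
        exact Subtype.ext h
    calc (s.filter fun a => F a = b).card ≤ _ := Finset.card_le_card hsub
      _ ≤ 2 := by
        apply le_trans (Finset.card_insert_le _ _)
        simp
  have himgT : ↑(s.image F) ⊆ T := by
    intro H hH
    rw [Finset.coe_image] at hH
    obtain ⟨σ, _, rfl⟩ := hH
    exact hmemT σ
  have hTcard : (s.image F).card ≤ T.ncard := by
    rw [← Set.ncard_coe_finset]
    exact Set.ncard_le_ncard himgT hTfin
  have hscard : s.card = n.factorial := by
    rw [hs, Finset.card_univ, hcardD]
  have hfinal : n.factorial ≤ 2 * T.ncard := by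
    calc n.factorial = s.card := hscard.symm
      _ ≤ 2 * (s.image F).card := hcount
      _ ≤ 2 * T.ncard := by omega
  have hgoal : (r - 1).factorial = n.factorial := by
    rw [hr]
    simp
  rw [hgoal]
  omega
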